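/- Let C ⊂ ℝ² \ {0} be a convex cone spanned by two linearly independent vectors, let E be the convex hull of C ∩ ℤ², and let w be a primitive lattice point in the interior of C. If there exists a lattice point v ∈ C such that w - v also lies in C, then w lies in the interior of E. Conversely, if w lies on the boundary of E, then for every lattice point v ∈ C the point w - v lies outside C. -/

import Mathlib

/-- Let `C` be the convex cone (minus the origin) spanned by two linearly
independent vectors of `ℝ²`, `E` the convex hull of the lattice points of `C`,
and `w = (a, b)` a primitive lattice point in the interior of `C`.
If some lattice point `v ∈ C` satisfies `w - v ∈ C`, then `w` lies in the
interior of `E`; conversely, if `w` lies on the boundary of `E`, then `w - v`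
lies outside `C` for every lattice point `v ∈ C`. -/
theorem interior_convexHull_lattice_cone (u v : ℝ × ℝ)
    (hli : LinearIndependent ℝ ![u, v])
    (C : Set (ℝ × ℝ))
    (hC : C = {x : ℝ × ℝ | ∃ s t : ℝ, 0 ≤ s ∧ 0 ≤ t ∧ x = s • u + t • v} \ {0})
    (E : Set (ℝ × ℝ))
    (hE : E = convexHull ℝ (C ∩ {x : ℝ × ℝ | ∃ p : ℤ × ℤ, x = ((p.1 : ℝ), (p.2 : ℝ))}))
    (a b : ℤ) (hprim : Int.gcd a b = 1)
    (hw : (((a : ℝ), (b : ℝ)) : ℝ × ℝ) ∈ interior C) :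
    ((∃ p : ℤ × ℤ, (((p.1 : ℝ), (p.2 : ℝ)) : ℝ × ℝ) ∈ C ∧
        (((a : ℝ) - (p.1 : ℝ), (b : ℝ) - (p.2 : ℝ)) : ℝ × ℝ) ∈ C) →
      (((a : ℝ), (b : ℝ)) : ℝ × ℝ) ∈ interior E) ∧
    ((((a : ℝ), (b : ℝ)) : ℝ × ℝ) ∈ frontier E →
      ∀ p : ℤ × ℤ, (((p.1 : ℝ), (p.2 : ℝ)) : ℝ × ℝ) ∈ C →
        (((a : ℝ) - (p.1 : ℝ), (b : ℝ) - (p.2 : ℝ)) : ℝ × ℝ) ∉ C) := by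
  have h0 : ∀ s t : ℝ, s • u + t • v = 0 → s = 0 ∧ t = 0 :=
    LinearIndependent.pair_iff.mp hli
  -- members of C are nonzero
  have hne : ∀ x ∈ C, x ≠ (0 : ℝ × ℝ) := by
    intro x hx
    rw [hC] at hx
    simpa using hx.2
  -- C is closed under addition
  have hadd : ∀ x y : ℝ × ℝ, x ∈ C → y ∈ C → x + y ∈ C := by
    intro x y hx hy
    rw [hC] at hx hy ⊢
    obtain ⟨⟨s, t, hs, ht, hxe⟩, hx0⟩ := hx
    obtain ⟨⟨s', t', hs', ht', hye⟩, hy0⟩ := hy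
    refine ⟨⟨s + s', t + t', by linarith, by linarith, by rw [hxe, hye]; module⟩, ?_⟩
    intro h
    simp only [Set.mem_singleton_iff] at h
    have hz : (s + s') • u + (t + t') • v = 0 := by
      rw [← h, hxe, hye]; module
    obtain ⟨h1, h2⟩ := h0 _ _ hz
    apply hx0
    simp only [Set.mem_singleton_iff]
    rw [hxe, show s = 0 by linarith, show t = 0 by linarith]
    simp
  have key : (∃ p : ℤ × ℤ, (((p.1 : ℝ), (p.2 : ℝ)) : ℝ × ℝ) ∈ C ∧
        (((a : ℝ) - (p.1 : ℝ), (b : ℝ) - (p.2 : ℝ)) : ℝ × ℝ) ∈ C) →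
      (((a : ℝ), (b : ℝ)) : ℝ × ℝ) ∈ interior E := by
    rintro ⟨p, hpC, hqC⟩
    set W : ℝ × ℝ := ((a : ℝ), (b : ℝ)) with hWdef
    set V : ℝ × ℝ := ((p.1 : ℝ), (p.2 : ℝ)) with hVdef
    set Q : ℝ × ℝ := ((a : ℝ) - (p.1 : ℝ), (b : ℝ) - (p.2 : ℝ)) with hQdef
    have hWC : W ∈ C := interior_subset hw
    have hWVQ : W = V + Q := by
      simp [hWdef, hVdef, hQdef, Prod.ext_iff]
    -- V and Q are linearly independent
    have hVQ : LinearIndependent ℝ ![V, Q] := by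
      rw [linearIndependent_fin2]
      refine ⟨by simpa using hne Q hqC, ?_⟩
      intro c hc
      simp only [Matrix.cons_val_one, Matrix.head_cons, Matrix.cons_val_zero] at hc
      -- hc : c • Q = V
      rcases lt_trichotomy c 0 with hcneg | hc0 | hcpos
      · -- then -V ∈ C, contradiction with V ∈ C
        have hnVC : -V ∈ C := by
          rw [hC]
          have hq' := hqC
          rw [hC] at hq'
          obtain ⟨⟨s, t, hs, ht, hQe⟩, _⟩ := hq'
          refine ⟨⟨(-c) * s, (-c) * t, by nlinarith, by nlinarith, ?_⟩, ?_⟩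
          · rw [← hc, hQe]; module
          · simp only [Set.mem_singleton_iff, neg_eq_zero]
            exact hne V hpC
        have := hne _ (hadd V (-V) hpC hnVC)
        simp at this
      · rw [hc0] at hc
        simp at hc
        exact hne V hpC hc.symm
      · -- c > 0 : V is a fractional multiple of the primitive vector W
        have hc1 : (0:ℝ) < 1 + c := by linarith
        have hcomp : c * ((a:ℝ) - p.1) = p.1 ∧ c * ((b:ℝ) - p.2) = p.2 := by
          have := hc
          rw [hQdef, hVdef, Prod.ext_iff] at this
          simpa [Prod.smul_mk] using this
        set μ : ℝ := c / (1 + c) with hμdef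
        have hμa : (p.1 : ℝ) = μ * a := by
          rw [hμdef]; field_simp; linarith [hcomp.1]
        have hμb : (p.2 : ℝ) = μ * b := by
          rw [hμdef]; field_simp; linarith [hcomp.2]
        have hμpos : 0 < μ := div_pos hcpos hc1
        have hμlt : μ < 1 := (div_lt_one hc1).mpr (by linarith)
        have hbez : (a : ℝ) * (Int.gcdA a b : ℝ) + (b : ℝ) * (Int.gcdB a b : ℝ) = 1 := by
          have := Int.gcd_eq_gcd_ab a b
          rw [hprim] at this
          exact_mod_cast congrArg (fun z : ℤ => (z : ℝ)) this.symm
        set m : ℤ := Int.gcdA a b * p.1 + Int.gcdB a b * p.2 with hmdef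
        have hm : (m : ℝ) = μ := by
          rw [hmdef]
          push_cast
          rw [hμa, hμb]
          linear_combination μ * hbez
        have hm0 : (0 : ℤ) < m := by exact_mod_cast hm ▸ hμpos
        have hm1 : m < 1 := by
          have : (m : ℝ) < 1 := hm ▸ hμlt
          exact_mod_cast this
        omega
    -- the four surrounding lattice points
    have hS : ∀ z : ℝ × ℝ, z ∈ C → (∃ q : ℤ × ℤ, z = ((q.1 : ℝ), (q.2 : ℝ))) → z ∈ E := by
      intro z hz hzl
      rw [hE]
      exact subset_convexHull ℝ _ ⟨hz, hzl⟩
    have hP1 : W + V ∈ E := by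
      refine hS _ (hadd W V hWC hpC) ⟨(a + p.1, b + p.2), ?_⟩
      simp [hWdef, hVdef, Prod.ext_iff]
    have hP2 : W - V ∈ E := by
      have : W - V = Q := by simp [hWdef, hVdef, hQdef, Prod.ext_iff]
      rw [this]
      exact hS _ hqC ⟨(a - p.1, b - p.2), by simp [hQdef, Prod.ext_iff]⟩
    have hP3 : W + Q ∈ E := by
      refine hS _ (hadd W Q hWC hqC) ⟨(2 * a - p.1, 2 * b - p.2), ?_⟩
      simp [hWdef, hQdef, Prod.ext_iff]; constructor <;> ring
    have hP4 : W - Q ∈ E := by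
      have : W - Q = V := by simp [hWdef, hVdef, hQdef, Prod.ext_iff]
      rw [this]
      exact hS _ hpC ⟨p, rfl⟩
    have hEconv : Convex ℝ E := hE ▸ convex_convexHull ℝ _
    -- the linear equivalence (s,t) ↦ s • V + t • Q
    set f : (ℝ × ℝ) →ₗ[ℝ] (ℝ × ℝ) :=
      ((LinearMap.fst ℝ ℝ ℝ).smulRight V) + ((LinearMap.snd ℝ ℝ ℝ).smulRight Q) with hfdef
    have hf : ∀ x : ℝ × ℝ, f x = x.1 • V + x.2 • Q := by
      intro x; simp [hfdef]
    have hinj : Function.Injective f := by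
      rw [injective_iff_map_eq_zero]
      intro x hx
      rw [hf] at hx
      obtain ⟨h1, h2⟩ := LinearIndependent.pair_iff.mp hVQ x.1 x.2 hx
      exact Prod.ext h1 h2
    set e : (ℝ × ℝ) ≃ₗ[ℝ] (ℝ × ℝ) :=
      LinearEquiv.ofBijective f ⟨hinj, LinearMap.injective_iff_surjective.mp hinj⟩ with hedef
    set h : (ℝ × ℝ) ≃ₜ (ℝ × ℝ) :=
      (e.toContinuousLinearEquiv.toHomeomorph).trans (Homeomorph.addLeft W) with hhdef
    have hh : ∀ x : ℝ × ℝ, h x = W + (x.1 • V + x.2 • Q) := by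
      intro x
      simp [hhdef, hedef, Homeomorph.trans_apply, hf]
      exact hf x
    set O : Set (ℝ × ℝ) := {x : ℝ × ℝ | |x.1| + |x.2| < 1} with hOdef
    have hOopen : IsOpen O := by
      have hcont : Continuous fun x : ℝ × ℝ => |x.1| + |x.2| :=
        ((continuous_fst.abs).add (continuous_snd.abs))
      exact isOpen_lt hcont continuous_const
    refine mem_interior.mpr ⟨h '' O, ?_, (h.isOpenMap) O hOopen, ⟨0, by simp [hOdef], by simp [hh]⟩⟩
    -- h '' O ⊆ E
    rintro z ⟨x, hxO, rfl⟩
    rw [hh]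
    obtain ⟨s, t⟩ := x
    simp only [hOdef, Set.mem_setOf_eq] at hxO
    -- convex combination of the four points
    have habs : ∀ r : ℝ, max r 0 + max (-r) 0 = |r| ∧ max r 0 - max (-r) 0 = r := by
      intro r
      rcases le_total r 0 with hr | hr
      · rw [max_eq_right hr, max_eq_left (neg_nonneg.mpr hr), abs_of_nonpos hr]
        constructor <;> ring
      · rw [max_eq_left hr, max_eq_right (neg_nonpos.mpr hr), abs_of_nonneg hr]
        constructor <;> ring
    obtain ⟨hs1, hs2⟩ := habs s
    obtain ⟨ht1, ht2⟩ := habs t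
    set ms := max s 0
    set ns := max (-s) 0
    set mt := max t 0
    set nt := max (-t) 0
    have hd : 0 ≤ (1 - ms - ns - mt - nt) / 2 := by
      have : ms + ns + (mt + nt) < 1 := by rw [hs1, ht1]; exact hxO
      linarith
    have hms0 : 0 ≤ ms := le_max_right _ _
    have hns0 : 0 ≤ ns := le_max_right _ _
    have hmt0 : 0 ≤ mt := le_max_right _ _
    have hnt0 : 0 ≤ nt := le_max_right _ _
    have := hEconv.sum_mem (t := Finset.univ) (ι := Fin 4)
      (w := ![ms + (1 - ms - ns - mt - nt) / 2, ns + (1 - ms - ns - mt - nt) / 2, mt, nt])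
      (z := ![W + V, W - V, W + Q, W - Q])
      (by
        intro i _
        fin_cases i <;> simp <;> linarith)
      (by
        simp [Fin.sum_univ_four]; ring)
      (by
        intro i _
        fin_cases i
        · simpa using hP1
        · simpa using hP2
        · simpa using hP3
        · simpa using hP4)
    rw [Fin.sum_univ_four] at this
    simp only [Matrix.cons_val_zero, Matrix.cons_val_one, Matrix.head_cons,
      Matrix.cons_val_two, Matrix.tail_cons, Matrix.cons_val_three] at this
    convert this using 1
    rw [hWdef, hVdef, hQdef]
    simp only [Prod.smul_mk, Prod.mk_add_mk, Prod.mk_sub_mk, smul_eq_mul, Prod.ext_iff]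
    constructor
    · linear_combination ((p.1 : ℝ) - (a : ℝ)) * ht2 - (p.1 : ℝ) * hs2
    · linear_combination ((p.2 : ℝ) - (b : ℝ)) * ht2 - (p.2 : ℝ) * hs2
  refine ⟨key, ?_⟩
  intro hfr p hp hq
  have : (((a : ℝ), (b : ℝ)) : ℝ × ℝ) ∈ interior E := key ⟨p, hp, hq⟩
  exact hfr.2 this
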